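/- Let r₀ > 0 and let T : [r₀, ∞) → [e, ∞) be increasing and continuous. Define F := {r ≥ r₀ : T(r(1 + 1/(log T(r))²)) > e·T(r)}. Then ∫_F (1/t) dt ≤ π²/6. -/

import Mathlib

open Real Set MeasureTheory
open scoped Classical
set_option linter.unusedSectionVars false

noncomputable def borelD (T : ℝ → ℝ) (r : ℝ) : ℝ := r * (1 + 1 / (Real.log (T r)) ^ 2)

noncomputable def borelA (T : ℝ → ℝ) (F : Set ℝ) : ℕ → ℝ
  | 0 => sInf F
  | n+1 =>
      let b := borelD T (borelA T F n)
      if (F ∩ Set.Ici b).Nonempty then sInf (F ∩ Set.Ici b) else b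

lemma borelD_self_le (T : ℝ → ℝ) {r : ℝ} (hr : 0 ≤ r) : r ≤ borelD T r := by
  have h : 0 ≤ 1 / (Real.log (T r)) ^ 2 := by positivity
  unfold borelD; nlinarith

section chain

variable {r₀ : ℝ} (hr₀ : 0 < r₀) {T : ℝ → ℝ} {F : Set ℝ}
  (hFsub : F ⊆ Set.Ici r₀)
  (hval : ∀ r ∈ Set.Ici r₀, Real.exp 1 ≤ T r)
  (hmono : MonotoneOn T (Set.Ici r₀))
  (hcont : ContinuousOn T (Set.Ici r₀))
  (hFlt : ∀ r ∈ F, Real.exp 1 * T r < T (borelD T r))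

include hr₀ hFsub

lemma borelA_mem (hFne : F.Nonempty) : ∀ n, r₀ ≤ borelA T F n := by
  intro n
  induction n with
  | zero => exact le_csInf hFne fun r hr => hFsub hr
  | succ n ih =>
      show r₀ ≤ (if (F ∩ Set.Ici (borelD T (borelA T F n))).Nonempty then
          sInf (F ∩ Set.Ici (borelD T (borelA T F n))) else borelD T (borelA T F n))
      split_ifs with h
      · exact le_csInf h fun r hr => hFsub hr.1
      · exact le_trans ih (borelD_self_le T (le_trans hr₀.le ih))

lemma borelA_le_D (hFne : F.Nonempty) (n : ℕ) :
    borelA T F n ≤ borelD T (borelA T F n) :=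
  borelD_self_le T (le_trans hr₀.le (borelA_mem hr₀ hFsub hFne n))

lemma borelD_le_succ (n : ℕ) :
    borelD T (borelA T F n) ≤ borelA T F (n + 1) := by
  show borelD T (borelA T F n) ≤ (if (F ∩ Set.Ici (borelD T (borelA T F n))).Nonempty then
      sInf (F ∩ Set.Ici (borelD T (borelA T F n))) else borelD T (borelA T F n))
  split_ifs with h
  · exact le_csInf h fun r hr => hr.2
  · exact le_rfl

lemma borelA_succ_eq (n : ℕ) (h : (F ∩ Set.Ici (borelD T (borelA T F n))).Nonempty) :
    borelA T F (n + 1) = sInf (F ∩ Set.Ici (borelD T (borelA T F n))) := by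
  show (if (F ∩ Set.Ici (borelD T (borelA T F n))).Nonempty then
      sInf (F ∩ Set.Ici (borelD T (borelA T F n))) else borelD T (borelA T F n)) = _
  rw [if_pos h]

lemma borelA_monotone (hFne : F.Nonempty) : Monotone (borelA T F) :=
  monotone_nat_of_le_succ fun n =>
    le_trans (borelA_le_D hr₀ hFsub hFne n) (borelD_le_succ hr₀ hFsub n)

include hval hcont hFlt in
lemma borel_closure_key {x : ℝ} (hx : x ∈ closure F) :
    Real.exp 1 * T x ≤ T (borelD T x) := by
  have hTpos : ∀ r ∈ Set.Ici r₀, 0 < T r :=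
    fun r hr => lt_of_lt_of_le (Real.exp_pos 1) (hval r hr)
  have hlog1 : ∀ r ∈ Set.Ici r₀, 1 ≤ Real.log (T r) :=
    fun r hr => (Real.le_log_iff_exp_le (hTpos r hr)).mpr (hval r hr)
  have hDmem : Set.MapsTo (borelD T) (Set.Ici r₀) (Set.Ici r₀) := fun r hr =>
    le_trans hr (borelD_self_le T (le_trans hr₀.le hr))
  have h1 : ContinuousOn (fun r => Real.log (T r)) (Set.Ici r₀) :=
    hcont.log fun r hr => (hTpos r hr).ne'
  have h2 : ContinuousOn (fun r => 1 / (Real.log (T r)) ^ 2) (Set.Ici r₀) :=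
    continuousOn_const.div (h1.pow 2) fun r hr => by nlinarith [hlog1 r hr]
  have hcontD : ContinuousOn (borelD T) (Set.Ici r₀) :=
    continuousOn_id.mul (continuousOn_const.add h2)
  have hg : ContinuousOn (fun r => T (borelD T r) - Real.exp 1 * T r) (Set.Ici r₀) :=
    ((hcont.comp hcontD hDmem).sub (continuousOn_const.mul hcont))
  have hx' : x ∈ Set.Ici r₀ := closure_minimal hFsub isClosed_Ici hx
  have cwa : ContinuousWithinAt (fun r => T (borelD T r) - Real.exp 1 * T r) F x :=
    (hg x hx').mono hFsub
  have hne : (nhdsWithin x F).NeBot := mem_closure_iff_nhdsWithin_neBot.mp hx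
  have h0 : 0 ≤ T (borelD T x) - Real.exp 1 * T x := by
    refine ge_of_tendsto cwa ?_
    exact Filter.eventually_of_mem self_mem_nhdsWithin
      fun r hr => sub_nonneg.mpr (hFlt r hr).le
  linarith

include hval hmono hcont hFlt in
lemma borel_exp_le {n : ℕ} (hne : (F ∩ Set.Ici (borelA T F n)).Nonempty) :
    Real.exp (n + 1) ≤ T (borelA T F n) := by
  obtain ⟨r, hrF, hrge⟩ := hne
  have hFne : F.Nonempty := ⟨r, hrF⟩
  have hFbdd : BddBelow F := ⟨r₀, fun x hx => hFsub hx⟩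
  have hclos : ∀ k ≤ n, borelA T F k ∈ closure F := by
    intro k hk
    match k with
    | 0 => exact csInf_mem_closure hFne hFbdd
    | (k+1) =>
        have hstep : (F ∩ Set.Ici (borelD T (borelA T F k))).Nonempty :=
          ⟨r, hrF, le_trans (borelD_le_succ hr₀ hFsub k)
            (le_trans (borelA_monotone hr₀ hFsub hFne hk) hrge)⟩
        rw [borelA_succ_eq hr₀ hFsub k hstep]
        exact closure_mono inter_subset_left
          (csInf_mem_closure hstep ⟨r₀, fun x hx => hFsub hx.1⟩)
  have hexp : ∀ k ≤ n, Real.exp (k + 1) ≤ T (borelA T F k) := by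
    intro k
    induction k with
    | zero =>
        intro _
        simpa using hval _ (borelA_mem hr₀ hFsub hFne 0)
    | succ k ih =>
        intro hk
        have hk' : k ≤ n := le_of_lt (Nat.lt_of_lt_of_le (Nat.lt_succ_self k) hk)
        have h1 : Real.exp 1 * T (borelA T F k) ≤ T (borelD T (borelA T F k)) :=
          borel_closure_key hr₀ hFsub hval hcont hFlt (hclos k hk')
        have h2 : T (borelD T (borelA T F k)) ≤ T (borelA T F (k + 1)) :=
          hmono (le_trans (borelA_mem hr₀ hFsub hFne k) (borelA_le_D hr₀ hFsub hFne k))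
            (borelA_mem hr₀ hFsub hFne (k + 1)) (borelD_le_succ hr₀ hFsub k)
        have : Real.exp ((k : ℝ) + 1 + 1) = Real.exp 1 * Real.exp ((k : ℝ) + 1) := by
          rw [← Real.exp_add]; ring_nf
        calc Real.exp ((k + 1 : ℕ) + 1) = Real.exp 1 * Real.exp ((k : ℝ) + 1) := by
              push_cast; rw [← Real.exp_add]; ring_nf
          _ ≤ Real.exp 1 * T (borelA T F k) :=
              mul_le_mul_of_nonneg_left (ih hk') (Real.exp_pos 1).le
          _ ≤ T (borelD T (borelA T F k)) := h1
          _ ≤ T (borelA T F (k + 1)) := h2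
  exact hexp n le_rfl

include hval hmono hcont hFlt in
lemma borel_cover :
    F ⊆ ⋃ n, F ∩ Set.Icc (borelA T F n) (borelD T (borelA T F n)) := by
  intro r hr
  by_contra hnot
  simp only [Set.mem_iUnion, Set.mem_inter_iff, Set.mem_Icc, not_exists, not_and] at hnot
  have hFne : F.Nonempty := ⟨r, hr⟩
  have hFbdd : BddBelow F := ⟨r₀, fun x hx => hFsub hx⟩
  have key : ∀ n, borelA T F n ≤ r := by
    intro n
    induction n with
    | zero => exact csInf_le hFbdd hr
    | succ n ih =>
        have hd : borelD T (borelA T F n) < r := by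
          rcases lt_or_ge (borelD T (borelA T F n)) r with h | h
          · exact h
          · exact absurd h (by simpa using (hnot n hr ih))
        have hstep : (F ∩ Set.Ici (borelD T (borelA T F n))).Nonempty := ⟨r, hr, hd.le⟩
        rw [borelA_succ_eq hr₀ hFsub n hstep]
        exact csInf_le ⟨r₀, fun x hx => hFsub hx.1⟩ ⟨hr, hd.le⟩
  obtain ⟨n, hn⟩ := exists_nat_gt (T r)
  have h1 : Real.exp (n + 1) ≤ T (borelA T F n) :=
    borel_exp_le hr₀ hFsub hval hmono hcont hFlt ⟨r, hr, key n⟩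
  have h2 : T (borelA T F n) ≤ T r :=
    hmono (borelA_mem hr₀ hFsub hFne n) (hFsub hr) (key n)
  have h3 : (n : ℝ) + 1 + 1 ≤ Real.exp ((n : ℝ) + 1) := Real.add_one_le_exp _
  linarith

end chain
lemma lintegral_Icc_one_div {A B : ℝ} (hA : 0 < A) (hAB : A ≤ B) :
    ∫⁻ t in Set.Icc A B, ENNReal.ofReal (1/t) = ENNReal.ofReal (Real.log (B/A)) := by
  have hcont : ContinuousOn (fun t : ℝ => 1/t) (Set.Icc A B) :=
    continuousOn_const.div continuousOn_id fun x hx => (lt_of_lt_of_le hA hx.1).ne'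
  have hInt : IntegrableOn (fun t : ℝ => 1/t) (Set.Ioc A B) :=
    (hcont.integrableOn_Icc).mono_set Set.Ioc_subset_Icc_self
  have hnn : 0 ≤ᵐ[volume.restrict (Set.Ioc A B)] fun t : ℝ => 1/t :=
    (ae_restrict_mem measurableSet_Ioc).mono fun x hx =>
      one_div_nonneg.mpr (le_of_lt (lt_trans hA hx.1))
  rw [← setLIntegral_congr (Ioc_ae_eq_Icc (μ := volume) (a := A) (b := B)),
    ← ofReal_integral_eq_lintegral_ofReal hInt hnn]
  congr 1
  rw [← intervalIntegral.integral_of_le hAB]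
  exact integral_one_div fun h => by
    have := (Set.uIcc_of_le hAB ▸ h).1; linarith

lemma basel_succ : HasSum (fun n : ℕ => 1/((n:ℝ)+1)^2) (π^2/6) := by
  have h := (hasSum_nat_add_iff' (f := fun n : ℕ => (1:ℝ)/(n:ℝ)^2) 1).mpr hasSum_zeta_two
  simp only [Finset.sum_range_one, Nat.cast_zero, Nat.cast_add, Nat.cast_one] at h
  norm_num at h
  convert h using 2 with n
  case e'_5 => ring
  case e'_3 => rfl



open Real in
/-- **Borel-type growth lemma.** If `T : [r₀, ∞) → [e, ∞)` is increasing and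
continuous, then the exceptional set
`F = {r ≥ r₀ : T(r (1 + 1/(log T(r))²)) > e T(r)}` satisfies `∫_F dt/t ≤ π²/6`. -/
theorem borel_growth_lemma
    (r₀ : ℝ) (hr₀ : 0 < r₀) (T : ℝ → ℝ)
    (hval : ∀ r ∈ Set.Ici r₀, Real.exp 1 ≤ T r)
    (hmono : MonotoneOn T (Set.Ici r₀))
    (hcont : ContinuousOn T (Set.Ici r₀)) :
    ∫ t in {r : ℝ | r₀ ≤ r ∧
        Real.exp 1 * T r < T (r * (1 + 1 / (Real.log (T r)) ^ 2))},
      (1 / t) ≤ π ^ 2 / 6 := by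
  set F : Set ℝ := {r : ℝ | r₀ ≤ r ∧
      Real.exp 1 * T r < T (r * (1 + 1 / (Real.log (T r)) ^ 2))} with hFdef
  have hFsub : F ⊆ Set.Ici r₀ := fun r hr => hr.1
  have hFlt : ∀ r ∈ F, Real.exp 1 * T r < T (borelD T r) := fun r hr => hr.2

  have hTpos : ∀ r ∈ Set.Ici r₀, 0 < T r :=
    fun r hr => lt_of_lt_of_le (Real.exp_pos 1) (hval r hr)
  have hmeas : AEStronglyMeasurable (fun t : ℝ => 1/t) (volume.restrict F) :=
    (measurable_const.div measurable_id).aestronglyMeasurable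
  have hres : volume.restrict F ≤ volume.restrict (Set.Ici r₀) :=
    Measure.restrict_mono hFsub le_rfl
  have hnn : 0 ≤ᵐ[volume.restrict F] fun t : ℝ => 1/t :=
    Filter.Eventually.filter_mono (ae_mono hres)
      ((ae_restrict_mem measurableSet_Ici).mono fun x hx =>
        one_div_nonneg.mpr (le_trans hr₀.le hx))
  rw [integral_eq_lintegral_of_nonneg_ae hnn hmeas]
  have perterm : ∀ n : ℕ,
      ∫⁻ t in F ∩ Set.Icc (borelA T F n) (borelD T (borelA T F n)), ENNReal.ofReal (1/t)
        ≤ ENNReal.ofReal (1/((n:ℝ)+1)^2) := by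
    intro n
    rcases (F ∩ Set.Icc (borelA T F n) (borelD T (borelA T F n))).eq_empty_or_nonempty
      with h | h
    · rw [h, Measure.restrict_empty, lintegral_zero_measure]
      exact zero_le
    · obtain ⟨r, hrF, hrIcc⟩ := h
      have hFne : F.Nonempty := ⟨r, hrF⟩
      have hAr₀ : r₀ ≤ borelA T F n := borelA_mem hr₀ hFsub hFne n
      have hA : 0 < borelA T F n := lt_of_lt_of_le hr₀ hAr₀
      have hAB : borelA T F n ≤ borelD T (borelA T F n) := borelA_le_D hr₀ hFsub hFne n
      have hexp : Real.exp ((n:ℝ) + 1) ≤ T (borelA T F n) :=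
        borel_exp_le hr₀ hFsub hval hmono hcont hFlt ⟨r, hrF, hrIcc.1⟩
      have hlogT : (n:ℝ) + 1 ≤ Real.log (T (borelA T F n)) :=
        (Real.le_log_iff_exp_le (hTpos _ hAr₀)).mpr hexp
      have hratio : borelD T (borelA T F n) / borelA T F n
          = 1 + 1 / (Real.log (T (borelA T F n))) ^ 2 := by
        unfold borelD; field_simp
      have hδnn : 0 ≤ 1 / (Real.log (T (borelA T F n))) ^ 2 := by positivity
      have hlog_le : Real.log (borelD T (borelA T F n) / borelA T F n)
          ≤ 1/((n:ℝ)+1)^2 := by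
        rw [hratio]
        have h1 : Real.log (1 + 1 / (Real.log (T (borelA T F n))) ^ 2)
            ≤ 1 / (Real.log (T (borelA T F n))) ^ 2 := by
          have := Real.log_le_sub_one_of_pos
            (show (0:ℝ) < 1 + 1 / (Real.log (T (borelA T F n))) ^ 2 by positivity)
          linarith
        have h2 : 1 / (Real.log (T (borelA T F n))) ^ 2 ≤ 1/((n:ℝ)+1)^2 := by
          apply one_div_le_one_div_of_le (by positivity)
          exact pow_le_pow_left₀ (by positivity) hlogT 2
        linarith
      calc ∫⁻ t in F ∩ Set.Icc (borelA T F n) (borelD T (borelA T F n)),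
              ENNReal.ofReal (1/t)
          ≤ ∫⁻ t in Set.Icc (borelA T F n) (borelD T (borelA T F n)),
              ENNReal.ofReal (1/t) := lintegral_mono_set inter_subset_right
        _ = ENNReal.ofReal (Real.log (borelD T (borelA T F n) / borelA T F n)) :=
            lintegral_Icc_one_div hA hAB
        _ ≤ ENNReal.ofReal (1/((n:ℝ)+1)^2) := ENNReal.ofReal_le_ofReal hlog_le
  have hbound : ∫⁻ t in F, ENNReal.ofReal (1/t) ≤ ENNReal.ofReal (π^2/6) := by
    calc ∫⁻ t in F, ENNReal.ofReal (1/t)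
        ≤ ∫⁻ t in ⋃ n, F ∩ Set.Icc (borelA T F n) (borelD T (borelA T F n)),
            ENNReal.ofReal (1/t) :=
          lintegral_mono_set (borel_cover hr₀ hFsub hval hmono hcont hFlt)
      _ ≤ ∑' n, ∫⁻ t in F ∩ Set.Icc (borelA T F n) (borelD T (borelA T F n)),
            ENNReal.ofReal (1/t) := lintegral_iUnion_le _ _
      _ ≤ ∑' n : ℕ, ENNReal.ofReal (1/((n:ℝ)+1)^2) := ENNReal.tsum_le_tsum perterm
      _ = ENNReal.ofReal (π^2/6) := by
          rw [← ENNReal.ofReal_tsum_of_nonneg (fun n => by positivity)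
            basel_succ.summable, basel_succ.tsum_eq]
  refine le_trans (ENNReal.toReal_mono ENNReal.ofReal_ne_top hbound) ?_
  rw [ENNReal.toReal_ofReal (by positivity)]
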